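/- Let P = (p_1, …, p_n) be a finite sequence of pairwise distinct points in ℝ^d and q a query point whose distances to p_1, …, p_n are pairwise distinct. Fix k < n, let p_{i_1}, …, p_{i_k} with i_1 < i_2 < … < i_k be the k nearest neighbors of q in P (listed by increasing index), and let p_ℓ be the (k+1)-th nearest neighbor of q in P. Then either ℓ < i_1 (i.e., p_ℓ belongs to the prefix P_{1:i_1−1}), or there exists j ∈ {1, …, k} such that p_ℓ is a successor of p_{i_j}, i.e., i_j < ℓ and Cell(p_{i_j}; P_{1:ℓ}) is a proper subset of Cell(p_{i_j}; P_{1:ℓ−1}). -/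

import Mathlib

open Set
open scoped RealInnerProductSpace

noncomputable section

/-- Euclidean space `ℝ^d`. -/
abbrev E (d : ℕ) := EuclideanSpace ℝ (Fin d)

/-- The Voronoi cell of `p` with respect to the site set `S`:
all points at least as close to `p` as to every site of `S`. -/
def cell {d : ℕ} (p : E d) (S : Set (E d)) : Set (E d) :=
  {x | ∀ s ∈ S, dist x p ≤ dist x s}

/-- The prefix set `P_{1:m}` consisting of the first `m` points of the
sequence `p` (0-based indices `< m`). -/
def pref {d n : ℕ} (p : Fin n → E d) (m : ℕ) : Set (E d) :=
  p '' {i : Fin n | (i : ℕ) < m}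

/-- `p j` is a successor of `p i` (`p j ∈ L i`): `i < j` and the insertion of
`p j` prunes the Voronoi cell of `p i`, i.e. `Cell(p_i; P_{1:j})` is a proper
subset of `Cell(p_i; P_{1:j-1})` (in 1-based notation). -/
def isSucc {d n : ℕ} (p : Fin n → E d) (i j : Fin n) : Prop :=
  i < j ∧ cell (p i) (pref p ((j : ℕ) + 1)) ⊂ cell (p i) (pref p (j : ℕ))

/-- `p i` is the nearest neighbor `Φ_{1:m}(q)` of `q` in the prefix `P_{1:m}`. -/
def isNearest {d n : ℕ} (p : Fin n → E d) (q : E d) (m : ℕ) (i : Fin n) : Prop :=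
  (i : ℕ) < m ∧ ∀ j : Fin n, (j : ℕ) < m → dist q (p i) ≤ dist q (p j)

lemma rootAux1 (c e : ℝ) (h : c - e ≠ 0) : c / (c - e) - 1 = e / (c - e) := by
  field_simp
  ring

lemma rootAux2 (c e : ℝ) (h : c - e ≠ 0) : c + c / (c - e) * (e - c) = 0 := by
  field_simp
  ring

lemma segKey {d : ℕ} (q z s : E d) (t : ℝ) :
    dist (q + t • (z - q)) s ^ 2 - dist (q + t • (z - q)) z ^ 2
      = (1 - t) * (dist q s ^ 2 - dist q z ^ 2) + t * dist z s ^ 2 := by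
  have h : ∀ a b : E d, dist a b ^ 2 = ‖a‖^2 - 2 * ⟪a, b⟫ + ‖b‖^2 := by
    intro a b
    rw [dist_eq_norm, norm_sub_sq_real]
  simp only [h, inner_add_left, inner_add_right, inner_sub_left, inner_sub_right,
    real_inner_smul_left, real_inner_smul_right, real_inner_self_eq_norm_sq,
    real_inner_comm q z, real_inner_comm q s, real_inner_comm z s]
  ring


/-- the (k+1)-th nearest neighbor of `q` either precedes all of
the `k` nearest neighbors in insertion order, or is a successor of one of them. -/
theorem stmt0
    {d n k : ℕ} (hd : 1 ≤ d) (hk : k < n) (hk0 : 0 < k)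
    (p : Fin n → E d) (hp : Function.Injective p)
    (q : E d) (hq : Function.Injective fun i => dist q (p i))
    (ι : Fin k → Fin n) (hmono : StrictMono ι)
    (hknn : ∀ a b : Fin n, (∃ j, ι j = a) → (¬ ∃ j, ι j = b) →
      dist q (p a) < dist q (p b))
    (ℓ : Fin n) (hℓ : ¬ ∃ j, ι j = ℓ)
    (hℓnear : ∀ b : Fin n, (¬ ∃ j, ι j = b) → dist q (p ℓ) ≤ dist q (p b)) :
    ℓ < ι ⟨0, hk0⟩ ∨ ∃ j : Fin k, isSucc p (ι j) ℓ := by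
  rcases lt_or_ge ℓ (ι ⟨0, hk0⟩) with h0 | h0
  · exact Or.inl h0
  right
  have hι0 : ι ⟨0, hk0⟩ < ℓ := lt_of_le_of_ne h0 (fun h => hℓ ⟨_, h⟩)
  set z : E d := p ℓ with hz
  set x : ℝ → E d := fun t => q + t • (z - q) with hx
  set G : Fin n → ℝ → ℝ := fun i t => dist (x t) (p i) ^ 2 - dist (x t) z ^ 2 with hG
  have hG0 : ∀ i, G i 0 = dist q (p i) ^ 2 - dist q z ^ 2 := by
    intro i; simp [hG, hx]
  have hG1 : ∀ i, G i 1 = dist z (p i) ^ 2 := by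
    intro i; simp [hG, hx]
  have hGaff : ∀ i t, G i t = (1 - t) * G i 0 + t * G i 1 := by
    intro i t
    rw [hG0, hG1]
    exact segKey q z (p i) t
  have hlin : ∀ i t, G i t = G i 0 + t * (G i 1 - G i 0) := by
    intro i t; rw [hGaff i t]; ring
  -- basic sign facts
  have hpos1 : ∀ i : Fin n, (i : ℕ) < (ℓ : ℕ) → 0 < G i 1 := by
    intro i hi
    rw [hG1]
    have hne : z ≠ p i := by
      intro h
      exact absurd (hp h) (by intro h'; rw [← h'] at hi; exact lt_irrefl _ hi)
    have := dist_pos.mpr hne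
    positivity
  have hAneg : ∀ a : Fin n, (∃ j, ι j = a) → G a 0 < 0 := by
    intro a ha
    have := hknn a ℓ ha hℓ
    rw [hG0]
    nlinarith [dist_nonneg (x := q) (y := p a)]
  have hBpos : ∀ s : Fin n, (¬ ∃ j, ι j = s) → s ≠ ℓ → 0 < G s 0 := by
    intro s hs hsl
    have hle := hℓnear s hs
    have hne : dist q (p ℓ) ≠ dist q (p s) := by
      intro h
      exact hsl (hq h).symm
    have hlt : dist q (p ℓ) < dist q (p s) := lt_of_le_of_ne hle hne
    rw [hG0]
    nlinarith [dist_nonneg (x := q) (y := p ℓ)]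
  -- finsets of neighbors / non-neighbors before ℓ
  set A : Finset (Fin n) := Finset.univ.filter (fun i => (i : ℕ) < (ℓ : ℕ) ∧ ∃ j, ι j = i) with hA
  set B : Finset (Fin n) := Finset.univ.filter (fun i => (i : ℕ) < (ℓ : ℕ) ∧ ¬ ∃ j, ι j = i) with hB
  have hAne : A.Nonempty :=
    ⟨ι ⟨0, hk0⟩, Finset.mem_filter.mpr ⟨Finset.mem_univ _, Fin.lt_def.mp hι0, ⟨⟨0, hk0⟩, rfl⟩⟩⟩
  -- roots
  set r : Fin n → ℝ := fun a => G a 0 / (G a 0 - G a 1) with hr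
  have hroot : ∀ a ∈ A, 0 < r a ∧ r a < 1 ∧ G a (r a) = 0 ∧ ∀ t, r a < t → 0 < G a t := by
    intro a ha
    simp only [hA, Finset.mem_filter] at ha
    have hc : G a 0 < 0 := hAneg a ha.2.2
    have hd : 0 < G a 1 := hpos1 a ha.2.1
    have hcd : G a 0 - G a 1 < 0 := by linarith
    have h1 : 0 < r a := div_pos_of_neg_of_neg hc hcd
    have h2 : r a < 1 := by
      have : r a - 1 = G a 1 / (G a 0 - G a 1) := rootAux1 _ _ (ne_of_lt hcd)
      have hneg : G a 1 / (G a 0 - G a 1) < 0 := div_neg_of_pos_of_neg hd hcd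
      linarith
    have h3 : G a (r a) = 0 := by
      rw [hlin]
      exact rootAux2 _ _ (ne_of_lt hcd)
    refine ⟨h1, h2, h3, fun t ht => ?_⟩
    have := hlin a t
    have := hlin a (r a)
    nlinarith
  -- the latest root
  set tstar : ℝ := A.sup' hAne r with htstar
  obtain ⟨astar, hastar, hastar2⟩ := Finset.exists_mem_eq_sup' hAne r
  have ht0 : 0 < tstar := by rw [htstar, hastar2]; exact (hroot astar hastar).1
  have ht1 : tstar < 1 := by rw [htstar, hastar2]; exact (hroot astar hastar).2.1
  have hGstar : G astar tstar = 0 := by rw [htstar, hastar2]; exact (hroot astar hastar).2.2.1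
  -- positivity of non-neighbors at tstar
  have hGBstar : ∀ s ∈ B, 0 < G s tstar := by
    intro s hs
    simp only [hB, Finset.mem_filter] at hs
    have h0 : 0 < G s 0 := hBpos s hs.2.2 (by intro h; rw [h] at hs; exact lt_irrefl _ hs.2.1)
    have h1 : 0 < G s 1 := hpos1 s hs.2.1
    rw [hGaff]
    nlinarith
  -- continuity
  have hcont : ∀ i : Fin n, Continuous fun t : ℝ => G i t := by
    intro i
    simp only [hG, hx]
    fun_prop
  -- eventual strictness slightly past tstar
  have hev1 : ∀ᶠ t in nhdsWithin tstar (Set.Ioi tstar), tstar < t :=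
    Filter.eventually_of_mem self_mem_nhdsWithin (fun t ht => ht)
  have hev2 : ∀ᶠ t in nhdsWithin tstar (Set.Ioi tstar), ∀ s ∈ B, G astar t < G s t := by
    rw [Filter.eventually_all_finset]
    intro s hs
    have h1 : Filter.Tendsto (fun t => G astar t) (nhdsWithin tstar (Set.Ioi tstar))
        (nhds (G astar tstar)) := ((hcont astar).tendsto tstar).mono_left nhdsWithin_le_nhds
    have h2 : Filter.Tendsto (fun t => G s t) (nhdsWithin tstar (Set.Ioi tstar))
        (nhds (G s tstar)) := ((hcont s).tendsto tstar).mono_left nhdsWithin_le_nhds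
    exact h1.eventually_lt h2 (by rw [hGstar]; exact hGBstar s hs)
  obtain ⟨t, htgt, htB⟩ := (hev1.and hev2).exists
  -- the minimizing neighbor at parameter t
  obtain ⟨a', ha'A, ha'min⟩ := Finset.exists_min_image A (fun a => G a t) hAne
  have ha'pos : 0 < G a' t := by
    refine (hroot a' ha'A).2.2.2 t ?_
    refine lt_of_le_of_lt ?_ htgt
    rw [htstar]
    exact Finset.le_sup' r ha'A
  have ha'le : ∀ i : Fin n, (i : ℕ) < (ℓ : ℕ) → G a' t ≤ G i t := by
    intro i hi
    by_cases hni : ∃ j, ι j = i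
    · exact ha'min i (Finset.mem_filter.mpr ⟨Finset.mem_univ _, hi, hni⟩)
    · have : i ∈ B := Finset.mem_filter.mpr ⟨Finset.mem_univ _, hi, hni⟩
      exact le_of_lt (lt_of_le_of_lt (ha'min astar hastar) (htB i this))
  simp only [hA, Finset.mem_filter] at ha'A
  obtain ⟨-, ha'ℓ, j, hj⟩ := ha'A
  refine ⟨j, ?_, ?_⟩
  · rw [hj]; exact Fin.lt_def.mpr ha'ℓ
  rw [hj]
  have hsub : cell (p a') (pref p ((ℓ : ℕ) + 1)) ⊆ cell (p a') (pref p (ℓ : ℕ)) := by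
    intro y hy s hs
    refine hy s ?_
    obtain ⟨i, hi, rfl⟩ := hs
    exact ⟨i, Nat.lt_succ_of_lt hi, rfl⟩
  refine ⟨hsub, fun hcontra => ?_⟩
  -- the witness point x t
  have hw1 : x t ∈ cell (p a') (pref p (ℓ : ℕ)) := by
    intro s hs
    obtain ⟨i, hi, rfl⟩ := hs
    have := ha'le i hi
    simp only [hG] at this
    nlinarith [dist_nonneg (x := x t) (y := p a'), dist_nonneg (x := x t) (y := p i)]
  have hw2 := hcontra hw1 (p ℓ) ⟨ℓ, Nat.lt_succ_self _, rfl⟩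
  simp only [hG, ← hz] at ha'pos
  nlinarith [dist_nonneg (x := x t) (y := z), dist_nonneg (x := x t) (y := p a')]
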